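/- For every d ≥ 1 and all x, y in the simplex S_d, ∫₀¹ ‖Ψ(u, x) − Ψ(u, y)‖₂² du = 2 − ‖x − y‖₂² − 2 Σ_{i=1}^d Leb( (S_{i−1}^x, S_i^x] ∩ (S_{i−1}^y, S_i^y] ), where Leb denotes Lebesgue measure on ℝ and ‖·‖₂ is the Euclidean norm on ℝ^d. -/

import Mathlib

open MeasureTheory

/-- Partial sum `S_i^x = x_1 + ⋯ + x_i` of the first `i` coordinates of `x : ℝ^d`. -/
def partSum {d : ℕ} (x : Fin d → ℝ) (i : ℕ) : ℝ :=
  ∑ j ∈ Finset.univ.filter (fun j : Fin d => (j : ℕ) < i), x j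

/-- The vector field `Ψ(u, x)` whose `i`-th component is
`1_{(S_{i-1}^x, S_i^x]}(u) − x_i`. -/
noncomputable def Psi {d : ℕ} (x : Fin d → ℝ) (u : ℝ) (i : Fin d) : ℝ :=
  (if u ∈ Set.Ioc (partSum x (i : ℕ)) (partSum x ((i : ℕ) + 1)) then (1 : ℝ) else 0) - x i

lemma partSum_succ {d : ℕ} (x : Fin d → ℝ) (i : Fin d) :
    partSum x ((i : ℕ) + 1) = partSum x (i : ℕ) + x i := by
  unfold partSum
  have h : Finset.univ.filter (fun j : Fin d => (j : ℕ) < (i : ℕ) + 1)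
      = insert i (Finset.univ.filter (fun j : Fin d => (j : ℕ) < (i : ℕ))) := by
    ext j
    simp [Fin.ext_iff, Nat.lt_succ_iff_lt_or_eq, or_comm]
    rw [le_iff_eq_or_lt, Fin.ext_iff]
  rw [h, Finset.sum_insert (by simp), add_comm]

lemma partSum_nonneg {d : ℕ} {x : Fin d → ℝ} (hx : ∀ j, 0 ≤ x j) (i : ℕ) :
    0 ≤ partSum x i :=
  Finset.sum_nonneg fun j _ => hx j

lemma partSum_mono {d : ℕ} {x : Fin d → ℝ} (hx : ∀ j, 0 ≤ x j) {m n : ℕ} (h : m ≤ n) :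
    partSum x m ≤ partSum x n := by
  apply Finset.sum_le_sum_of_subset_of_nonneg
  · intro j hj
    simp only [Finset.mem_filter] at *
    exact ⟨hj.1, hj.2.trans_le h⟩
  · intro j _ _; exact hx j

lemma partSum_top {d : ℕ} {x : Fin d → ℝ} (hx : ∑ j, x j = 1) :
    partSum x d = 1 := by
  unfold partSum
  rw [Finset.filter_true_of_mem (fun j _ => j.isLt)]
  exact hx

lemma Ioc_subset_unit {d : ℕ} {x : Fin d → ℝ} (hx : x ∈ stdSimplex ℝ (Fin d)) (i : Fin d) :
    Set.Ioc (partSum x (i : ℕ)) (partSum x ((i : ℕ) + 1)) ⊆ Set.Ioc 0 1 := by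
  apply Set.Ioc_subset_Ioc
  · exact partSum_nonneg hx.1 _
  · calc partSum x ((i : ℕ) + 1) ≤ partSum x d := partSum_mono hx.1 i.isLt
      _ = 1 := partSum_top hx.2

lemma vol_Ioc_partSum {d : ℕ} {x : Fin d → ℝ} (hx : x ∈ stdSimplex ℝ (Fin d)) (i : Fin d) :
    (volume (Set.Ioc (partSum x (i : ℕ)) (partSum x ((i : ℕ) + 1)))).toReal = x i := by
  rw [Real.volume_Ioc, partSum_succ, add_sub_cancel_left, ENNReal.toReal_ofReal (hx.1 i)]

lemma ind_intervalIntegrable {S : Set ℝ} (hS : MeasurableSet S) :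
    IntervalIntegrable (S.indicator (fun _ => (1:ℝ))) volume 0 1 := by
  rw [intervalIntegrable_iff_integrableOn_Ioc_of_le zero_le_one]
  exact (integrableOn_const (by simp)).indicator hS

lemma integral_ind' {S : Set ℝ} (hS : MeasurableSet S) (hS1 : S ⊆ Set.Ioc 0 1) :
    ∫ u in (0:ℝ)..1, S.indicator (fun _ => (1:ℝ)) u = (volume S).toReal := by
  rw [intervalIntegral.integral_of_le zero_le_one, setIntegral_indicator hS,
    Set.inter_comm, Set.inter_eq_left.2 hS1]
  simp [setIntegral_const]
  rfl

lemma ind_sq_expand (c : ℝ) (A B : Set ℝ) (u : ℝ) :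
    (A.indicator (fun _ => (1:ℝ)) u - B.indicator (fun _ => (1:ℝ)) u - c) ^ 2
      = (1 - 2*c) * A.indicator (fun _ => (1:ℝ)) u
          + ((1 + 2*c) * B.indicator (fun _ => (1:ℝ)) u
            + ((-2) * (A ∩ B).indicator (fun _ => (1:ℝ)) u + c ^ 2)) := by
  by_cases ha : u ∈ A <;> by_cases hb : u ∈ B <;>
    simp [Set.indicator_apply, ha, hb, Set.mem_inter_iff] <;> ring

lemma sq_intervalIntegrable (c : ℝ) {A B : Set ℝ} (hA : MeasurableSet A)
    (hB : MeasurableSet B) :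
    IntervalIntegrable (fun u =>
      (A.indicator (fun _ => (1:ℝ)) u - B.indicator (fun _ => (1:ℝ)) u - c) ^ 2)
      volume 0 1 := by
  simp only [ind_sq_expand c A B]
  exact ((ind_intervalIntegrable hA).const_mul _).add
    (((ind_intervalIntegrable hB).const_mul _).add
      (((ind_intervalIntegrable (hA.inter hB)).const_mul _).add intervalIntegrable_const))

lemma integral_term (c : ℝ) {A B : Set ℝ} (hA : MeasurableSet A) (hB : MeasurableSet B)
    (hA1 : A ⊆ Set.Ioc 0 1) (hB1 : B ⊆ Set.Ioc 0 1) :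
    ∫ u in (0:ℝ)..1,
        (A.indicator (fun _ => (1:ℝ)) u - B.indicator (fun _ => (1:ℝ)) u - c) ^ 2
      = (volume A).toReal + (volume B).toReal - 2 * (volume (A ∩ B)).toReal
        - 2 * c * ((volume A).toReal - (volume B).toReal) + c ^ 2 := by
  have hf := ind_intervalIntegrable hA
  have hg := ind_intervalIntegrable hB
  have hh := ind_intervalIntegrable (hA.inter hB)
  simp only [ind_sq_expand c A B]
  rw [
    intervalIntegral.integral_add (hf.const_mul _)
      ((hg.const_mul _).add ((hh.const_mul _).add intervalIntegrable_const)),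
    intervalIntegral.integral_add (hg.const_mul _)
      ((hh.const_mul _).add intervalIntegrable_const),
    intervalIntegral.integral_add (hh.const_mul _) intervalIntegrable_const,
    intervalIntegral.integral_const_mul, intervalIntegral.integral_const_mul,
    intervalIntegral.integral_const_mul, intervalIntegral.integral_const,
    integral_ind' hA hA1, integral_ind' hB hB1,
    integral_ind' (hA.inter hB) ((Set.inter_subset_left).trans hA1)]
  simp only [smul_eq_mul]
  ring

theorem integral_sq_norm_Psi_sub
    (d : ℕ) (hd : 1 ≤ d) (x y : Fin d → ℝ)
    (hx : x ∈ stdSimplex ℝ (Fin d)) (hy : y ∈ stdSimplex ℝ (Fin d)) :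
    ∫ u in (0:ℝ)..1, (∑ i, (Psi x u i - Psi y u i) ^ 2)
      = 2 - (∑ i, (x i - y i) ^ 2)
        - 2 * ∑ i : Fin d,
            (MeasureTheory.volume
              (Set.Ioc (partSum x (i : ℕ)) (partSum x ((i : ℕ) + 1))
                ∩ Set.Ioc (partSum y (i : ℕ)) (partSum y ((i : ℕ) + 1)))).toReal := by
  set A := fun i : Fin d => Set.Ioc (partSum x (i : ℕ)) (partSum x ((i : ℕ) + 1)) with hA
  set B := fun i : Fin d => Set.Ioc (partSum y (i : ℕ)) (partSum y ((i : ℕ) + 1)) with hB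
  have hPsi : ∀ i : Fin d, (fun u : ℝ => (Psi x u i - Psi y u i) ^ 2)
      = fun u => ((A i).indicator (fun _ => (1:ℝ)) u
        - (B i).indicator (fun _ => (1:ℝ)) u - (x i - y i)) ^ 2 := by
    intro i
    funext u
    simp only [Psi, hA, hB, Set.indicator_apply]
    ring_nf
  have hterm : ∀ i : Fin d, ∫ u in (0:ℝ)..1, (Psi x u i - Psi y u i) ^ 2
      = x i + y i - (x i - y i) ^ 2 - 2 * (volume (A i ∩ B i)).toReal := by
    intro i
    rw [intervalIntegral.integral_congr (g := fun u => ((A i).indicator (fun _ => (1:ℝ)) u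
        - (B i).indicator (fun _ => (1:ℝ)) u - (x i - y i)) ^ 2)
      (fun u _ => congrFun (hPsi i) u)]
    rw [integral_term (x i - y i) measurableSet_Ioc measurableSet_Ioc
      (Ioc_subset_unit hx i) (Ioc_subset_unit hy i),
      vol_Ioc_partSum hx i, vol_Ioc_partSum hy i]
    ring
  have hint : ∀ i ∈ Finset.univ, IntervalIntegrable
      (fun u : ℝ => (Psi x u i - Psi y u i) ^ 2) volume 0 1 := by
    intro i _
    rw [hPsi i]
    exact sq_intervalIntegrable _ measurableSet_Ioc measurableSet_Ioc
  rw [intervalIntegral.integral_finset_sum hint]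
  simp only [hterm]
  rw [Finset.sum_sub_distrib, Finset.sum_sub_distrib, Finset.sum_add_distrib,
    hx.2, hy.2, ← Finset.mul_sum]
  ring
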